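/- Let (x_1,...,x_n) be a pure Nash equilibrium of the Battling Influencers Game and suppose for some player i* the weight w_{i*} is nonzero and x_{i*} lies in the topological interior of 𝒳. Then the receiver's point equals player i*'s target: w_0 x_0 + ∑_{j=1}^n w_j x_j = t_{i*}. -/

import Mathlib

open scoped RealInnerProductSpace

noncomputable section

/-- Player `i`'s loss in the Battling Influencers Game:
`ℓ_i(x) = ‖w_0 x_0 + ∑_{j=1}^n w_j x_j − t_i‖₂²`. -/
def loss {d n : ℕ} (w0 : ℝ) (x0 : EuclideanSpace ℝ (Fin d)) (w : Fin n → ℝ)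
    (t : Fin n → EuclideanSpace ℝ (Fin d)) (i : Fin n)
    (x : Fin n → EuclideanSpace ℝ (Fin d)) : ℝ :=
  ‖w0 • x0 + (∑ j, w j • x j) - t i‖ ^ 2

/-- A pure Nash equilibrium of the Battling Influencers Game with common action
set `X`: every player plays in `X` and no player can strictly decrease its own
loss by a unilateral deviation inside `X`. -/
def IsPureNE {d n : ℕ} (X : Set (EuclideanSpace ℝ (Fin d))) (w0 : ℝ)
    (x0 : EuclideanSpace ℝ (Fin d)) (w : Fin n → ℝ)
    (t : Fin n → EuclideanSpace ℝ (Fin d))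
    (x : Fin n → EuclideanSpace ℝ (Fin d)) : Prop :=
  (∀ i, x i ∈ X) ∧
    ∀ i, ∀ y ∈ X, loss w0 x0 w t i x ≤ loss w0 x0 w t i (Function.update x i y)

/-- If at a pure Nash equilibrium some player `i⋆` with nonzero weight plays in
the interior of `𝒳`, then the receiver's point equals that player's target:
`w_0 x_0 + ∑_{j=1}^n w_j x_j = t_{i⋆}`. -/
theorem pNE_interior_on_target {d n : ℕ} (X : Set (EuclideanSpace ℝ (Fin d)))
    (w0 : ℝ) (x0 : EuclideanSpace ℝ (Fin d)) (w : Fin n → ℝ)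
    (t : Fin n → EuclideanSpace ℝ (Fin d))
    (x : Fin n → EuclideanSpace ℝ (Fin d)) (hNE : IsPureNE X w0 x0 w t x)
    (istar : Fin n) (hwi : w istar ≠ 0) (hint : x istar ∈ interior X) :
    w0 • x0 + (∑ j, w j • x j) = t istar := by
  obtain ⟨hmem, hne⟩ := hNE
  by_contra hcon
  set S : EuclideanSpace ℝ (Fin d) := w0 • x0 + (∑ j, w j • x j) with hS
  set v : EuclideanSpace ℝ (Fin d) := t istar - S with hv
  have hvne : v ≠ 0 := sub_ne_zero.mpr (Ne.symm hcon)
  have hvpos : 0 < ‖v‖ := norm_pos_iff.mpr hvne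
  obtain ⟨δ, hδ, hball⟩ := Metric.isOpen_iff.mp isOpen_interior _ hint
  set ε : ℝ := min (1/2) (δ * |w istar| / (2 * ‖v‖)) with hε
  have hwabs : 0 < |w istar| := abs_pos.mpr hwi
  have hεpos : 0 < ε := lt_min (by norm_num) (by positivity)
  have hε1 : ε < 1 := lt_of_le_of_lt (min_le_left _ _) (by norm_num)
  set y : EuclideanSpace ℝ (Fin d) := x istar + (ε / w istar) • v with hy
  have hdist : dist y (x istar) < δ := by
    rw [hy, dist_eq_norm, add_sub_cancel_left, norm_smul]
    have h1 : ‖(ε / w istar)‖ = ε / |w istar| := by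
      rw [Real.norm_eq_abs, abs_div, abs_of_pos hεpos]
    rw [h1]
    have h2 : ε ≤ δ * |w istar| / (2 * ‖v‖) := min_le_right _ _
    have : ε / |w istar| * ‖v‖ ≤ δ / 2 := by
      rw [div_mul_eq_mul_div, div_le_div_iff₀ hwabs (by norm_num)]
      calc ε * ‖v‖ * 2 ≤ (δ * |w istar| / (2 * ‖v‖)) * ‖v‖ * 2 := by
            gcongr
        _ = δ * |w istar| := by field_simp
    linarith
  have hyX : y ∈ X := interior_subset (hball hdist)
  have hle := hne istar y hyX
  have hsum : (∑ j, w j • Function.update x istar y j)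
      = (∑ j, w j • x j) + w istar • (y - x istar) := by
    have hupd : (fun j => w j • Function.update x istar y j)
        = Function.update (fun j => w j • x j) istar (w istar • y) := by
      funext j
      by_cases h : j = istar
      · subst h; simp
      · simp [Function.update_of_ne h]
    rw [hupd, Finset.sum_update_of_mem (Finset.mem_univ istar),
      ← Finset.sum_erase_add Finset.univ (fun j => w j • x j) (Finset.mem_univ istar),
      Finset.sum_sdiff_eq_sub (Finset.singleton_subset_iff.mpr (Finset.mem_univ istar))]
    simp [smul_sub]
    abel
  have hkey : w istar • (y - x istar) = ε • v := by
    rw [hy, add_sub_cancel_left, smul_smul, mul_div_cancel₀ _ hwi]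
  have hlhs : loss w0 x0 w t istar x = ‖v‖ ^ 2 := by
    rw [loss, ← hS, show S - t istar = -v by rw [hv]; abel, norm_neg]
  have hrhs : loss w0 x0 w t istar (Function.update x istar y) = (1 - ε) ^ 2 * ‖v‖ ^ 2 := by
    rw [loss, hsum, hkey]
    have : w0 • x0 + ((∑ j, w j • x j) + ε • v) - t istar = (ε - 1) • v := by
      rw [sub_smul, one_smul, hv]
      rw [hS]
      abel
    rw [this, norm_smul, Real.norm_eq_abs, mul_pow, sq_abs]
    ring_nf
  rw [hlhs, hrhs] at hle
  nlinarith [mul_pos (mul_pos hεpos (show (0:ℝ) < 2 - ε by linarith)) (mul_pos hvpos hvpos)]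

end
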